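/- Let $N, K \ge 1$ and $x_1,\dots,x_N, y_1,\dots,y_K \in \mathbb{R}^d$ be points such that for every subset $I \subseteq \{1,\dots,N\}$ and $J \subseteq \{1,\dots,K\}$, the Coulomb cost exchange inequality holds: $\sum_{i \in I}\sum_{k \in J^c} \frac{1}{|x_i - y_k|} + \sum_{i \in I^c}\sum_{k \in J} \frac{1}{|x_i - y_k|} \ge \sum_{i \in I}\sum_{j \in I^c} \frac{1}{|x_i - x_j|} + \sum_{k \in J}\sum_{\ell \in J^c} \frac{1}{|y_k - y_\ell|}$ (all points distinct where needed so that all terms are finite). Then $(N - K)^2 \le N + K$. -/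

import Mathlib

open Finset MeasureTheory Real
open scoped RealInnerProductSpace ENNReal

noncomputable section FKNscreening


/-- Gaussian weight. -/
def fknW {d : ℕ} (g : EuclideanSpace ℝ (Fin d)) : ℝ := rexp (-(2⁻¹ : ℝ) * ‖g‖ ^ 2)

lemma fknW_pos {d : ℕ} (g : EuclideanSpace ℝ (Fin d)) : 0 < fknW g := Real.exp_pos _

lemma integrable_gauss {V : Type*} [NormedAddCommGroup V] [InnerProductSpace ℝ V]
    [FiniteDimensional ℝ V] [MeasurableSpace V] [BorelSpace V] {b : ℝ} (hb : 0 < b) :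
    Integrable (fun v : V => rexp (-b * ‖v‖ ^ 2)) := by
  have h := (GaussianFourier.integrable_cexp_neg_mul_sq_norm_add
      (b := (b : ℂ)) (by simpa using hb) 0 (0 : V)).norm
  refine h.congr (Filter.Eventually.of_forall fun v => ?_)
  simp [Complex.norm_exp, ← Complex.ofReal_pow]

lemma integrable_fknW {d : ℕ} : Integrable (fun g : EuclideanSpace ℝ (Fin d) => fknW g) :=
  integrable_gauss (by norm_num)

lemma integrable_pos_inner_fknW {d : ℕ} (u : EuclideanSpace ℝ (Fin d)) :
    Integrable (fun g : EuclideanSpace ℝ (Fin d) => max ⟪u, g⟫ 0 * fknW g) := by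
  have hcont : Continuous fun g : EuclideanSpace ℝ (Fin d) => max ⟪u, g⟫ 0 * fknW g := by
    have h0 : Continuous fun g : EuclideanSpace ℝ (Fin d) => ⟪u, g⟫ :=
      Continuous.inner continuous_const continuous_id
    exact (h0.max continuous_const).mul (by unfold fknW; fun_prop)
  refine Integrable.mono' ((integrable_gauss (V := EuclideanSpace ℝ (Fin d))
      (by norm_num : (0:ℝ) < 4⁻¹)).const_mul (2 * ‖u‖)) hcont.aestronglyMeasurable
      (Filter.Eventually.of_forall fun g => ?_)
  have h1 : |max ⟪u, g⟫ 0| ≤ ‖u‖ * ‖g‖ := by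
    rw [abs_le]
    constructor
    · linarith [le_max_right ⟪u, g⟫ 0, mul_nonneg (norm_nonneg u) (norm_nonneg g)]
    · exact le_trans (max_le (real_inner_le_norm u g) (by positivity)) le_rfl
  have h2 : ‖g‖ * rexp (-(2⁻¹:ℝ) * ‖g‖ ^ 2) ≤ 2 * rexp (-(4⁻¹:ℝ) * ‖g‖ ^ 2) := by
    have hs : rexp (-(2⁻¹:ℝ) * ‖g‖ ^ 2) = rexp (-(4⁻¹:ℝ) * ‖g‖ ^ 2) * rexp (-(4⁻¹:ℝ) * ‖g‖ ^ 2) := by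
      rw [← Real.exp_add]; ring_nf
    have hb : ‖g‖ * rexp (-(4⁻¹:ℝ) * ‖g‖ ^ 2) ≤ 2 := by
      have := Real.add_one_le_exp ((4⁻¹:ℝ) * ‖g‖ ^ 2)
      have h3 : ‖g‖ ≤ 2 * rexp ((4⁻¹:ℝ) * ‖g‖ ^ 2) := by nlinarith [norm_nonneg g]
      have h4 : rexp (-(4⁻¹:ℝ) * ‖g‖ ^ 2) * rexp ((4⁻¹:ℝ) * ‖g‖ ^ 2) = 1 := by
        rw [← Real.exp_add]; ring_nf; exact Real.exp_zero
      nlinarith [Real.exp_pos (-(4⁻¹:ℝ) * ‖g‖ ^ 2), Real.exp_pos ((4⁻¹:ℝ) * ‖g‖ ^ 2),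
        norm_nonneg g]
    calc ‖g‖ * rexp (-(2⁻¹:ℝ) * ‖g‖ ^ 2)
        = (‖g‖ * rexp (-(4⁻¹:ℝ) * ‖g‖ ^ 2)) * rexp (-(4⁻¹:ℝ) * ‖g‖ ^ 2) := by rw [hs]; ring
      _ ≤ 2 * rexp (-(4⁻¹:ℝ) * ‖g‖ ^ 2) := by
          have := Real.exp_pos (-(4⁻¹:ℝ) * ‖g‖ ^ 2)
          nlinarith
  have hw : fknW g = rexp (-(2⁻¹:ℝ) * ‖g‖ ^ 2) := rfl
  rw [Real.norm_eq_abs, abs_mul, hw, abs_of_pos (Real.exp_pos _)]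
  calc |max ⟪u, g⟫ 0| * rexp (-(2⁻¹:ℝ) * ‖g‖ ^ 2)
      ≤ (‖u‖ * ‖g‖) * rexp (-(2⁻¹:ℝ) * ‖g‖ ^ 2) := by
        have := Real.exp_pos (-(2⁻¹:ℝ) * ‖g‖ ^ 2); nlinarith
    _ = ‖u‖ * (‖g‖ * rexp (-(2⁻¹:ℝ) * ‖g‖ ^ 2)) := by ring
    _ ≤ ‖u‖ * (2 * rexp (-(4⁻¹:ℝ) * ‖g‖ ^ 2)) := by
        exact mul_le_mul_of_nonneg_left h2 (norm_nonneg u)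
    _ = 2 * ‖u‖ * rexp (-(4⁻¹:ℝ) * ‖g‖ ^ 2) := by ring


def fknE0 (d : ℕ) (hd : 0 < d) : EuclideanSpace ℝ (Fin d) :=
  EuclideanSpace.single (⟨0, hd⟩ : Fin d) 1

lemma norm_fknE0 (d : ℕ) (hd : 0 < d) : ‖fknE0 d hd‖ = 1 := by
  simp [fknE0, EuclideanSpace.norm_single]

def fknC (d : ℕ) (hd : 0 < d) : ℝ :=
  ∫ g : EuclideanSpace ℝ (Fin d), max ⟪fknE0 d hd, g⟫ 0 * fknW g

lemma fknC_pos (d : ℕ) (hd : 0 < d) : 0 < fknC d hd := by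
  set e0 := fknE0 d hd with he0
  set f : EuclideanSpace ℝ (Fin d) → ℝ := fun g => max ⟪e0, g⟫ 0 * fknW g with hf
  have hnn : 0 ≤ᵐ[volume] f := Filter.Eventually.of_forall fun g => by
    have : (0:ℝ) ≤ max ⟪e0, g⟫ 0 := le_max_right _ _
    have hw : (0:ℝ) < fknW g := Real.exp_pos _
    positivity
  have hint := integrable_pos_inner_fknW e0
  rw [show fknC d hd = ∫ g, f g from rfl,
    integral_pos_iff_support_of_nonneg_ae hnn hint]
  have hco : Continuous fun g : EuclideanSpace ℝ (Fin d) => ⟪e0, g⟫ :=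
    Continuous.inner continuous_const continuous_id
  have hopen : IsOpen {g : EuclideanSpace ℝ (Fin d) | 0 < ⟪e0, g⟫} :=
    isOpen_lt continuous_const hco
  have hsub : {g : EuclideanSpace ℝ (Fin d) | 0 < ⟪e0, g⟫} ⊆ Function.support f := by
    intro g hg
    have hw : (0:ℝ) < fknW g := Real.exp_pos _
    have : 0 < max ⟪e0, g⟫ 0 := lt_of_lt_of_le hg (le_max_left _ _)
    exact ne_of_gt (by positivity)
  have hne : e0 ∈ {g : EuclideanSpace ℝ (Fin d) | 0 < ⟪e0, g⟫} := by
    simp only [Set.mem_setOf_eq, real_inner_self_eq_norm_sq]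
    rw [he0, norm_fknE0]; norm_num
  calc (0:ℝ≥0∞) < volume {g : EuclideanSpace ℝ (Fin d) | 0 < ⟪e0, g⟫} :=
        hopen.measure_pos volume ⟨e0, hne⟩
    _ ≤ volume (Function.support f) := measure_mono hsub

lemma integral_pos_inner_fknW (d : ℕ) (hd : 0 < d) (u : EuclideanSpace ℝ (Fin d)) :
    ∫ g : EuclideanSpace ℝ (Fin d), max ⟪u, g⟫ 0 * fknW g = ‖u‖ * fknC d hd := by
  by_cases hu : u = 0
  · simp [hu, inner_zero_left]
  set e0 := fknE0 d hd with he0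
  have hnu : ‖u‖ ≠ 0 := norm_ne_zero_iff.mpr hu
  have hn : ‖e0‖ = ‖‖u‖⁻¹ • u‖ := by
    rw [norm_fknE0, norm_smul, norm_inv, norm_norm, inv_mul_cancel₀ hnu]
  set R := Submodule.reflection (ℝ ∙ (e0 - ‖u‖⁻¹ • u))ᗮ with hR
  have hRe0 : R e0 = ‖u‖⁻¹ • u := Submodule.reflection_sub hn
  have hmp := (R : EuclideanSpace ℝ (Fin d) ≃ₗᵢ[ℝ] EuclideanSpace ℝ (Fin d)).measurePreserving
  rw [← hmp.integral_comp R.toHomeomorph.measurableEmbedding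
    (fun g => max ⟪u, g⟫ 0 * fknW g)]
  have key : ∀ g : EuclideanSpace ℝ (Fin d),
      max ⟪u, R g⟫ 0 * fknW (R g) = ‖u‖ * (max ⟪e0, g⟫ 0 * fknW g) := by
    intro g
    have h1 : ⟪e0, g⟫ = ‖u‖⁻¹ * ⟪u, R g⟫ := by
      rw [← LinearIsometryEquiv.inner_map_map R e0 g, hRe0, real_inner_smul_left]
    have h2 : ⟪u, R g⟫ = ‖u‖ * ⟪e0, g⟫ := by
      rw [h1]; field_simp
    have h3 : fknW (R g) = fknW g := by
      simp [fknW, LinearIsometryEquiv.norm_map]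
    rw [h2, h3]
    rw [show max (‖u‖ * ⟪e0, g⟫) 0 = ‖u‖ * max ⟪e0, g⟫ 0 by
      rw [mul_max_of_nonneg _ _ (norm_nonneg u), mul_zero]]
    ring
  simp_rw [key]
  rw [integral_const_mul]
  rfl


def fknChi (a b : ℝ) : ℝ → ℝ := (Set.Ioc b a).indicator (fun _ => (1:ℝ))

lemma fknChi_mul_eq (a b c t : ℝ) :
    fknChi a b t * c = if t ≤ a ∧ ¬ t ≤ b then c else 0 := by
  unfold fknChi
  rw [Set.indicator_apply]
  by_cases h : t ∈ Set.Ioc b a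
  · rw [if_pos h, one_mul, if_pos]
    obtain ⟨h1, h2⟩ := h
    exact ⟨h2, not_le.mpr h1⟩
  · rw [if_neg h, zero_mul, if_neg]
    intro ⟨h1, h2⟩
    exact h ⟨not_le.mp h2, h1⟩

lemma fknChi_mul_indicator (a b c : ℝ) :
    (fun t => fknChi a b t * c) = (Set.Ioc b a).indicator (fun _ => c) := by
  funext t
  unfold fknChi
  rw [Set.indicator_apply, Set.indicator_apply]
  by_cases h : t ∈ Set.Ioc b a <;> simp [h]

lemma integrable_fknChi_mul (a b c : ℝ) : Integrable (fun t => fknChi a b t * c) := by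
  rw [fknChi_mul_indicator]
  exact (integrable_indicator_iff measurableSet_Ioc).2
    (integrableOn_const measure_Ioc_lt_top.ne (by simp))

lemma integral_fknChi_mul (a b c : ℝ) : ∫ t, fknChi a b t * c = max (a - b) 0 * c := by
  rw [fknChi_mul_indicator, integral_indicator measurableSet_Ioc, setIntegral_const,
    Measure.real, Real.volume_Ioc, smul_eq_mul]
  by_cases h : b ≤ a
  · rw [ENNReal.toReal_ofReal (by linarith), max_eq_left (by linarith)]
  · rw [ENNReal.ofReal_eq_zero.mpr (by linarith), max_eq_right (by linarith)]
    simp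

lemma fkn_rearrange {d n m : ℕ} (p : Fin n → EuclideanSpace ℝ (Fin d))
    (q : Fin m → EuclideanSpace ℝ (Fin d)) (cst : Fin n → Fin m → ℝ)
    (g : EuclideanSpace ℝ (Fin d)) :
    (∑ i, ∑ j, max ⟪p i - q j, g⟫ 0 * cst i j) * fknW g
      = ∑ i, ∑ j, (max ⟪p i - q j, g⟫ 0 * fknW g) * cst i j := by
  rw [Finset.sum_mul]
  apply Finset.sum_congr rfl
  intro i _
  rw [Finset.sum_mul]
  apply Finset.sum_congr rfl
  intro j _
  ring

lemma fkn_integrable_double {d n m : ℕ} (p : Fin n → EuclideanSpace ℝ (Fin d))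
    (q : Fin m → EuclideanSpace ℝ (Fin d)) (cst : Fin n → Fin m → ℝ) :
    Integrable (fun g : EuclideanSpace ℝ (Fin d) =>
        (∑ i, ∑ j, max ⟪p i - q j, g⟫ 0 * cst i j) * fknW g) := by
  simp_rw [fkn_rearrange]
  exact integrable_finset_sum _ fun i _ =>
    integrable_finset_sum _ fun j _ => (integrable_pos_inner_fknW _).mul_const _

lemma fkn_integral_double {d n m : ℕ} (hd : 0 < d) (p : Fin n → EuclideanSpace ℝ (Fin d))
    (q : Fin m → EuclideanSpace ℝ (Fin d)) (cst : Fin n → Fin m → ℝ) :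
    ∫ g : EuclideanSpace ℝ (Fin d), (∑ i, ∑ j, max ⟪p i - q j, g⟫ 0 * cst i j) * fknW g
      = ∑ i, ∑ j, (‖p i - q j‖ * fknC d hd) * cst i j := by
  simp_rw [fkn_rearrange]
  rw [integral_finset_sum _ fun i _ =>
    integrable_finset_sum _ fun j _ => (integrable_pos_inner_fknW _).mul_const _]
  apply Finset.sum_congr rfl
  intro i _
  rw [integral_finset_sum _ fun j _ => (integrable_pos_inner_fknW _).mul_const _]
  apply Finset.sum_congr rfl
  intro j _
  rw [integral_mul_const, integral_pos_inner_fknW d hd]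

/-- rewriting filtered double sums as sums of indicator coefficients -/
lemma fkn_filter_eq {n m : ℕ} (p : Fin n → ℝ) (q : Fin m → ℝ) (cst : Fin n → Fin m → ℝ)
    (t : ℝ) :
    ∑ i ∈ univ.filter (fun i => t ≤ p i), ∑ j ∈ (univ.filter (fun j => t ≤ q j))ᶜ, cst i j
      = ∑ i, ∑ j, fknChi (p i) (q j) t * cst i j := by
  rw [Finset.sum_filter]
  apply Finset.sum_congr rfl
  intro i _
  rw [Finset.compl_filter, Finset.sum_filter]
  by_cases hi : t ≤ p i
  · rw [if_pos hi]
    apply Finset.sum_congr rfl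
    intro j _
    rw [fknChi_mul_eq]
    by_cases hj : t ≤ q j <;> simp [hi, hj]
  · rw [if_neg hi]
    symm
    apply Finset.sum_eq_zero
    intro j _
    rw [fknChi_mul_eq, if_neg]
    tauto

theorem stmt3 (d N K : ℕ) (hN : 1 ≤ N) (hK : 1 ≤ K)
    (x : Fin N → EuclideanSpace ℝ (Fin d)) (y : Fin K → EuclideanSpace ℝ (Fin d))
    (hxx : ∀ i j, i ≠ j → x i ≠ x j) (hyy : ∀ k l, k ≠ l → y k ≠ y l)
    (hxy : ∀ i k, x i ≠ y k)
    (hexch : ∀ (I : Finset (Fin N)) (J : Finset (Fin K)),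
      ∑ i ∈ I, ∑ j ∈ Iᶜ, 1 / dist (x i) (x j) + ∑ k ∈ J, ∑ l ∈ Jᶜ, 1 / dist (y k) (y l)
        ≤ ∑ i ∈ I, ∑ k ∈ Jᶜ, 1 / dist (x i) (y k)
          + ∑ i ∈ Iᶜ, ∑ k ∈ J, 1 / dist (x i) (y k)) :
    ((N : ℝ) - K) ^ 2 ≤ N + K := by
  rcases Nat.eq_zero_or_pos d with hd0 | hd
  · exfalso
    apply hxy ⟨0, hN⟩ ⟨0, hK⟩
    subst hd0
    ext j
    exact j.elim0
  -- Step B : pointwise-in-g screening inequality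
  have stepB : ∀ g : EuclideanSpace ℝ (Fin d),
      (∑ i, ∑ j, max ⟪x i - x j, g⟫ 0 * (1 / dist (x i) (x j)))
      + (∑ k, ∑ l, max ⟪y k - y l, g⟫ 0 * (1 / dist (y k) (y l)))
      ≤ (∑ i, ∑ k, max ⟪x i - y k, g⟫ 0 * (1 / dist (x i) (y k)))
      + (∑ k, ∑ i, max ⟪y k - x i, g⟫ 0 * (1 / dist (x i) (y k))) := by
    intro g
    have hsub : ∀ u v : EuclideanSpace ℝ (Fin d), ⟪u - v, g⟫ = ⟪u, g⟫ - ⟪v, g⟫ :=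
      fun u v => inner_sub_left u v g
    set a : Fin N → ℝ := fun i => ⟪x i, g⟫ with ha
    set b : Fin K → ℝ := fun k => ⟪y k, g⟫ with hb
    set L : ℝ → ℝ := fun t =>
      (∑ i, ∑ j, fknChi (a i) (a j) t * (1 / dist (x i) (x j)))
      + (∑ k, ∑ l, fknChi (b k) (b l) t * (1 / dist (y k) (y l))) with hL
    set R : ℝ → ℝ := fun t =>
      (∑ i, ∑ k, fknChi (a i) (b k) t * (1 / dist (x i) (y k)))
      + (∑ k, ∑ i, fknChi (b k) (a i) t * (1 / dist (x i) (y k))) with hR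
    have hLR : ∀ t, L t ≤ R t := by
      intro t
      have h := hexch (univ.filter fun i => t ≤ a i) (univ.filter fun k => t ≤ b k)
      have h4 : ∑ i ∈ (univ.filter fun i => t ≤ a i)ᶜ, ∑ k ∈ (univ.filter fun k => t ≤ b k),
          (1:ℝ) / dist (x i) (y k)
          = ∑ k, ∑ i, fknChi (b k) (a i) t * (1 / dist (x i) (y k)) := by
        rw [Finset.sum_comm, fkn_filter_eq b a (fun k i => 1 / dist (x i) (y k)) t]
      rw [fkn_filter_eq a a (fun i j => 1 / dist (x i) (x j)) t,
        fkn_filter_eq b b (fun k l => 1 / dist (y k) (y l)) t,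
        fkn_filter_eq a b (fun i k => 1 / dist (x i) (y k)) t, h4] at h
      exact h
    have hIL : Integrable L :=
      (integrable_finset_sum _ fun i _ => integrable_finset_sum _ fun j _ =>
        integrable_fknChi_mul _ _ _).add
      (integrable_finset_sum _ fun k _ => integrable_finset_sum _ fun l _ =>
        integrable_fknChi_mul _ _ _)
    have hIR : Integrable R :=
      (integrable_finset_sum _ fun i _ => integrable_finset_sum _ fun k _ =>
        integrable_fknChi_mul _ _ _).add
      (integrable_finset_sum _ fun k _ => integrable_finset_sum _ fun i _ =>
        integrable_fknChi_mul _ _ _)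
    have hmono := integral_mono hIL hIR hLR
    have hcalc : ∀ {n m : ℕ} (p : Fin n → EuclideanSpace ℝ (Fin d))
        (q : Fin m → EuclideanSpace ℝ (Fin d)) (cst : Fin n → Fin m → ℝ),
        ∫ t, ∑ i, ∑ j, fknChi ⟪p i, g⟫ ⟪q j, g⟫ t * cst i j
          = ∑ i, ∑ j, max ⟪p i - q j, g⟫ 0 * cst i j := by
      intro n m p q cst
      rw [integral_finset_sum _ fun i _ => integrable_finset_sum _ fun j _ =>
        integrable_fknChi_mul _ _ _]
      apply Finset.sum_congr rfl
      intro i _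
      rw [integral_finset_sum _ fun j _ => integrable_fknChi_mul _ _ _]
      apply Finset.sum_congr rfl
      intro j _
      rw [integral_fknChi_mul, hsub]
    rw [hL, hR] at hmono
    rw [integral_add
        (integrable_finset_sum _ fun i _ => integrable_finset_sum _ fun j _ =>
          integrable_fknChi_mul _ _ _)
        (integrable_finset_sum _ fun k _ => integrable_finset_sum _ fun l _ =>
          integrable_fknChi_mul _ _ _),
      integral_add
        (integrable_finset_sum _ fun i _ => integrable_finset_sum _ fun k _ =>
          integrable_fknChi_mul _ _ _)
        (integrable_finset_sum _ fun k _ => integrable_finset_sum _ fun i _ =>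
          integrable_fknChi_mul _ _ _),
      hcalc x x, hcalc y y, hcalc x y, hcalc y x] at hmono
    exact hmono
  -- Step C : integrate in g against the Gaussian weight
  set C := fknC d hd with hC
  have hCpos := fknC_pos d hd
  have hmono2 :
      (∫ g : EuclideanSpace ℝ (Fin d),
        ((∑ i, ∑ j, max ⟪x i - x j, g⟫ 0 * (1 / dist (x i) (x j)))
          + (∑ k, ∑ l, max ⟪y k - y l, g⟫ 0 * (1 / dist (y k) (y l)))) * fknW g)
      ≤ ∫ g : EuclideanSpace ℝ (Fin d),
        ((∑ i, ∑ k, max ⟪x i - y k, g⟫ 0 * (1 / dist (x i) (y k)))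
          + (∑ k, ∑ i, max ⟪y k - x i, g⟫ 0 * (1 / dist (x i) (y k)))) * fknW g := by
    apply integral_mono ?_ ?_ ?_
    · simp only [add_mul]
      exact (fkn_integrable_double x x fun i j => 1 / dist (x i) (x j)).add
        (fkn_integrable_double y y fun k l => 1 / dist (y k) (y l))
    · simp only [add_mul]
      exact (fkn_integrable_double x y fun i k => 1 / dist (x i) (y k)).add
        (fkn_integrable_double y x fun k i => 1 / dist (x i) (y k))
    · intro g
      exact mul_le_mul_of_nonneg_right (stepB g) (le_of_lt (fknW_pos g))
  simp only [add_mul] at hmono2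
  rw [integral_add (fkn_integrable_double x x _) (fkn_integrable_double y y _),
    integral_add (fkn_integrable_double x y _) (fkn_integrable_double y x _),
    fkn_integral_double hd x x, fkn_integral_double hd y y,
    fkn_integral_double hd x y, fkn_integral_double hd y x] at hmono2
  -- evaluate the four numerical sums
  have hxxsum : ∑ i, ∑ j, (‖x i - x j‖ * C) * (1 / dist (x i) (x j))
      = (N : ℝ) * ((N - 1) * C) := by
    have h1 : ∀ i : Fin N, ∑ j, (‖x i - x j‖ * C) * (1 / dist (x i) (x j))
        = ((N : ℝ) - 1) * C := by
      intro i
      have h2 : ∀ j : Fin N, (‖x i - x j‖ * C) * (1 / dist (x i) (x j))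
          = if i = j then 0 else C := by
        intro j
        by_cases h : i = j
        · simp [h]
        · have hne : x i ≠ x j := hxx i j h
          have hd0 : dist (x i) (x j) ≠ 0 := dist_ne_zero.mpr hne
          rw [if_neg h, dist_eq_norm] at *
          field_simp
      simp_rw [h2]
      have h3 : ∀ j : Fin N, (if i = j then (0:ℝ) else C) = C - (if i = j then C else 0) := by
        intro j; by_cases h : i = j <;> simp [h]
      simp_rw [h3]
      rw [Finset.sum_sub_distrib, Finset.sum_const, Finset.sum_ite_eq univ i fun _ => C,
        if_pos (Finset.mem_univ i)]
      simp [card_univ, mul_comm]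
      ring
    simp_rw [h1]
    rw [Finset.sum_const]
    simp [card_univ]
  have hyysum : ∑ k, ∑ l, (‖y k - y l‖ * C) * (1 / dist (y k) (y l))
      = (K : ℝ) * ((K - 1) * C) := by
    have h1 : ∀ k : Fin K, ∑ l, (‖y k - y l‖ * C) * (1 / dist (y k) (y l))
        = ((K : ℝ) - 1) * C := by
      intro k
      have h2 : ∀ l : Fin K, (‖y k - y l‖ * C) * (1 / dist (y k) (y l))
          = if k = l then 0 else C := by
        intro l
        by_cases h : k = l
        · simp [h]
        · have hne : y k ≠ y l := hyy k l h
          have hd0 : dist (y k) (y l) ≠ 0 := dist_ne_zero.mpr hne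
          rw [if_neg h, dist_eq_norm] at *
          field_simp
      simp_rw [h2]
      have h3 : ∀ l : Fin K, (if k = l then (0:ℝ) else C) = C - (if k = l then C else 0) := by
        intro l; by_cases h : k = l <;> simp [h]
      simp_rw [h3]
      rw [Finset.sum_sub_distrib, Finset.sum_const, Finset.sum_ite_eq univ k fun _ => C,
        if_pos (Finset.mem_univ k)]
      simp [card_univ, mul_comm]
      ring
    simp_rw [h1]
    rw [Finset.sum_const]
    simp [card_univ]
  have hxysum : ∑ i, ∑ k, (‖x i - y k‖ * C) * (1 / dist (x i) (y k))
      = (N : ℝ) * ((K : ℝ) * C) := by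
    have h1 : ∀ (i : Fin N) (k : Fin K), (‖x i - y k‖ * C) * (1 / dist (x i) (y k)) = C := by
      intro i k
      have hd0 : dist (x i) (y k) ≠ 0 := dist_ne_zero.mpr (hxy i k)
      rw [dist_eq_norm] at *
      field_simp
    simp_rw [h1]
    simp [Finset.sum_const, card_univ]
  have hyxsum : ∑ k, ∑ i, (‖y k - x i‖ * C) * (1 / dist (x i) (y k))
      = (K : ℝ) * ((N : ℝ) * C) := by
    have h1 : ∀ (k : Fin K) (i : Fin N), (‖y k - x i‖ * C) * (1 / dist (x i) (y k)) = C := by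
      intro k i
      have hd0 : dist (x i) (y k) ≠ 0 := dist_ne_zero.mpr (hxy i k)
      rw [dist_eq_norm, ← norm_sub_rev (x i)] at *
      field_simp
    simp_rw [h1]
    simp [Finset.sum_const, card_univ]
  rw [hxxsum, hyysum, hxysum, hyxsum] at hmono2
  have hfin : (N : ℝ) * ((N : ℝ) - 1) + (K : ℝ) * ((K : ℝ) - 1)
      ≤ (N : ℝ) * (K : ℝ) + (K : ℝ) * (N : ℝ) := by
    have := hmono2
    nlinarith [hCpos]
  nlinarith [hfin]

end FKNscreening
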